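/- Let n ≥ 1 and p be coprime to n, and write n = ∏ r^{e_r} over primes r. For each odd prime r dividing n let d_r be the multiplicative order of p modulo r^{e_r}. Then there exists an integer i with p^i ≡ -1 (mod n) if and only if: (i) the orders d_r for odd primes r dividing n are all even and all have the same 2-part 2^k ≥ 2; (ii) if 4 does not divide n but 2 divides n, then p ≡ -1 (mod 2); (iii) if 4 divides n, then p ≡ -1 (mod 2^{e_2}) and k = 1. Moreover when these conditions hold, i = lcm{ d_r / 2 : r odd prime dividing n } works if n has an odd prime divisor, and i = 1 works otherwise. -/
import Mathlib

-- basic cast lemma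
lemma helper_cast (m p i : ℕ) : (p : ZMod m) ^ i = -1 ↔ m ∣ p ^ i + 1 := by
  rw [← ZMod.natCast_eq_zero_iff]
  push_cast
  rw [eq_neg_iff_add_eq_zero]

-- sq roots of 1 mod odd prime power
lemma helper_sqrt {r e : ℕ} (hr : r.Prime) (hodd : Odd r) (he : 1 ≤ e)
    {y : ZMod (r ^ e)} (hy : y ^ 2 = 1) : y = 1 ∨ y = -1 := by
  haveI : NeZero (r ^ e) := ⟨pow_ne_zero _ hr.pos.ne'⟩
  have h1 : ((r : ℤ) ^ e) ∣ ((y.val : ℤ) - 1) * ((y.val : ℤ) + 1) := by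
    have : ((((y.val : ℤ) - 1) * ((y.val : ℤ) + 1) : ℤ) : ZMod (r ^ e)) = 0 := by
      push_cast
      rw [ZMod.natCast_val, ZMod.cast_id]
      ring_nf
      rw [← hy]; ring
    rwa [ZMod.intCast_zmod_eq_zero_iff_dvd, Nat.cast_pow] at this
  have hrp : Prime (r : ℤ) := Nat.prime_iff_prime_int.mp hr
  have h2 : ¬ ((r:ℤ) ∣ ((y.val : ℤ) - 1)) ∨ ¬ ((r:ℤ) ∣ ((y.val : ℤ) + 1)) := by
    by_contra hc
    push_neg at hc
    have hd2 : (r : ℤ) ∣ ((2:ℕ):ℤ) := by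
      have := dvd_sub hc.2 hc.1
      push_cast
      simpa using this
    have hd2' : r ∣ 2 := Int.natCast_dvd_natCast.mp hd2
    have : r = 2 := ((Nat.prime_dvd_prime_iff_eq hr Nat.prime_two).mp hd2')
    rw [this] at hodd
    exact absurd hodd (by decide)
  rcases h2 with h2 | h2
  · right
    have : ((r:ℤ)^e) ∣ ((y.val : ℤ) + 1) := (hrp.pow_dvd_of_dvd_mul_left e h2) h1
    have : (((y.val : ℤ) + 1 : ℤ) : ZMod (r^e)) = 0 := by
      rw [ZMod.intCast_zmod_eq_zero_iff_dvd]; exact_mod_cast this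
    push_cast at this
    rw [ZMod.natCast_val, ZMod.cast_id] at this
    linear_combination this
  · left
    have : ((r:ℤ)^e) ∣ ((y.val : ℤ) - 1) := (hrp.pow_dvd_of_dvd_mul_right e h2) h1
    have : (((y.val : ℤ) - 1 : ℤ) : ZMod (r^e)) = 0 := by
      rw [ZMod.intCast_zmod_eq_zero_iff_dvd]; exact_mod_cast this
    push_cast at this
    rw [ZMod.natCast_val, ZMod.cast_id] at this
    linear_combination this


lemma helper_local_odd {r e p : ℕ} (hr : r.Prime) (hodd : Odd r) (he : 1 ≤ e) (i : ℕ) :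
    ((p : ZMod (r ^ e)) ^ i = -1) ↔
      (orderOf (p : ZMod (r ^ e)) ∣ 2 * i ∧ ¬ orderOf (p : ZMod (r ^ e)) ∣ i) := by
  have hr3 : 3 ≤ r := by
    have h2 := hr.two_le
    rcases Nat.eq_or_lt_of_le h2 with h | h
    · exfalso; rw [← h] at hodd; exact (by decide : ¬ Odd 2) hodd
    · omega
  have hle : r ≤ r ^ e := Nat.le_self_pow (show e ≠ 0 by omega) r
  haveI : Fact (2 < r ^ e) := ⟨by omega⟩
  constructor
  · rintro h
    constructor
    · apply orderOf_dvd_of_pow_eq_one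
      rw [mul_comm, pow_mul, h]
      ring
    · intro hd
      rw [orderOf_dvd_iff_pow_eq_one] at hd
      rw [hd] at h
      exact ZMod.neg_one_ne_one h.symm
  · rintro ⟨h1, h2⟩
    have hy : ((p : ZMod (r ^ e)) ^ i) ^ 2 = 1 := by
      rw [← pow_mul, mul_comm, ← orderOf_dvd_iff_pow_eq_one]
      exact h1
    rcases helper_sqrt hr hodd he hy with h | h
    · exact absurd (orderOf_dvd_iff_pow_eq_one.mpr h) h2
    · exact h

lemma helper_local_two {e p : ℕ} (he : 2 ≤ e) (hcop : Nat.Coprime p (2 ^ e)) (i : ℕ) :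
    ((p : ZMod (2 ^ e)) ^ i = -1) ↔ ((p : ZMod (2 ^ e)) = -1 ∧ Odd i) := by
  haveI : NeZero (2 ^ e) := ⟨by positivity⟩
  constructor
  · intro h
    have hpodd : Odd p := Nat.coprime_two_right.mp
      (hcop.coprime_dvd_right (dvd_pow_self 2 (show e ≠ 0 by omega)))
    have hp2 : p % 2 = 1 := Nat.odd_iff.mp hpodd
    -- reduce mod 4
    have h4dvd : (4 : ℕ) ∣ 2 ^ e := by
      have : (4:ℕ) = 2 ^ 2 := by norm_num
      rw [this]; exact pow_dvd_pow 2 he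
    have h4 : (p : ZMod 4) ^ i = -1 := by
      have := congrArg (ZMod.castHom h4dvd (ZMod 4)) h
      rw [map_pow, map_natCast, map_neg, map_one] at this
      exact this
    have hp4 : (p : ZMod 4) = ((p % 4 : ℕ) : ZMod 4) := (ZMod.natCast_mod p 4).symm
    have : p % 4 = 1 ∨ p % 4 = 3 := by omega
    have hodd : Odd i := by
      rcases this with hm | hm
      · rw [hm] at hp4; norm_num at hp4
        rw [hp4, one_pow] at h4
        exact absurd h4 (by decide)
      · rw [hm] at hp4
        have hneg : (p : ZMod 4) = -1 := by rw [hp4]; decide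
        rw [hneg] at h4
        rcases Nat.even_or_odd i with hev | hodd
        · rw [hev.neg_one_pow] at h4
          exact absurd h4 (by decide)
        · exact hodd
    refine ⟨?_, hodd⟩
    -- now show p = -1 mod 2^e
    set u := ZMod.unitOfCoprime p hcop with hu
    have hord1 : orderOf (-u) ∣ 2 ^ (e - 1) := by
      have := orderOf_dvd_card (G := (ZMod (2 ^ e))ˣ) (x := -u)
      rw [ZMod.card_units_eq_totient, Nat.totient_prime_pow Nat.prime_two (by omega)]
        at this
      simpa using this

    have hord2 : orderOf (-u) ∣ i := by
      apply orderOf_dvd_of_pow_eq_one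
      ext
      push_cast
      rw [hodd.neg_pow]
      rw [ZMod.coe_unitOfCoprime, h]
      ring
    have : orderOf (-u) ∣ Nat.gcd (2 ^ (e - 1)) i := Nat.dvd_gcd hord1 hord2
    have hcop2 : Nat.Coprime (2 ^ (e - 1)) i := Nat.Coprime.pow_left _
      (Nat.coprime_two_left.mpr hodd)
    rw [Nat.Coprime] at hcop2
    rw [hcop2] at this
    have : (-u) = 1 := orderOf_eq_one_iff.mp (Nat.eq_one_of_dvd_one this)
    have := congrArg (Units.val) this
    push_cast at this
    rw [ZMod.coe_unitOfCoprime] at this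
    linear_combination -this
  · rintro ⟨h1, h2⟩
    rw [h1, h2.neg_one_pow]

lemma helper_fact_le {a b : ℕ} (hb : b ≠ 0) (h : a ∣ b) (l : ℕ) :
    a.factorization l ≤ b.factorization l := by
  rcases eq_or_ne a 0 with rfl | ha
  · exact absurd (zero_dvd_iff.mp h) hb
  · exact Finsupp.le_def.mp ((Nat.factorization_le_iff_dvd ha hb).mpr h) l

lemma helper_fact_two_mul {i : ℕ} (hi : i ≠ 0) (l : ℕ) :
    (2 * i).factorization l = i.factorization l + (if l = 2 then 1 else 0) := by
  rw [Nat.factorization_mul two_ne_zero hi]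
  rcases eq_or_ne l 2 with rfl | hl
  · simp [Nat.Prime.factorization Nat.prime_two, add_comm]
  · simp [Nat.Prime.factorization Nat.prime_two, Finsupp.single_apply, hl, Ne.symm hl]

lemma helper_dvd2 {d i : ℕ} (hd : d ≠ 0) :
    (d ∣ 2 * i ∧ ¬ d ∣ i) ↔
      (d ∣ 2 * i ∧ i ≠ 0 ∧ d.factorization 2 = i.factorization 2 + 1) := by
  constructor
  · rintro ⟨h1, h2⟩
    have hi : i ≠ 0 := by rintro rfl; exact h2 (dvd_zero d)
    refine ⟨h1, hi, ?_⟩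
    have hub : d.factorization 2 ≤ i.factorization 2 + 1 := by
      have := helper_fact_le (by positivity) h1 2
      rwa [helper_fact_two_mul hi, if_pos rfl] at this
    have hlb : ¬ d.factorization 2 ≤ i.factorization 2 := by
      intro hle
      apply h2
      rw [← Nat.factorization_le_iff_dvd hd hi, Finsupp.le_def]
      intro l
      rcases eq_or_ne l 2 with rfl | hl
      · exact hle
      · have := helper_fact_le (by positivity) h1 l
        rwa [helper_fact_two_mul hi, if_neg hl, add_zero] at this
    omega
  · rintro ⟨h1, hi, h3⟩
    refine ⟨h1, fun hdi => ?_⟩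
    have := helper_fact_le hi hdi 2
    omega

lemma helper_lcm_fact (m : ℕ) (S : Finset ℕ) (f : ℕ → ℕ) (hf : ∀ r ∈ S, f r ≠ 0)
    (hm : ∀ r ∈ S, (f r).factorization 2 = m) :
    S.lcm f ≠ 0 ∧ (S.Nonempty → (S.lcm f).factorization 2 = m) := by
  induction S using Finset.cons_induction with
  | empty => simp
  | cons a s ha ih =>
    have h1 := ih (fun r hr => hf r (Finset.mem_cons_of_mem hr))
      (fun r hr => hm r (Finset.mem_cons_of_mem hr))
    have hfa : f a ≠ 0 := hf a (Finset.mem_cons_self a s)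
    rw [Finset.cons_eq_insert, Finset.lcm_insert, lcm_eq_nat_lcm]
    refine ⟨Nat.lcm_ne_zero hfa h1.1, fun _ => ?_⟩
    rw [Nat.factorization_lcm hfa h1.1, Finsupp.sup_apply]
    rcases s.eq_empty_or_nonempty with rfl | hs
    · have := hm a (Finset.mem_cons_self a _)
      simp [this]
    · rw [hm a (Finset.mem_cons_self a _), h1.2 hs]
      simp

lemma helper_split {n : ℕ} (hn : n ≠ 0) {M : ℕ} (hM : M ≠ 0) :
    (n ∣ M ↔ ∀ r ∈ n.primeFactors, r ^ (n.factorization r) ∣ M) := by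
  constructor
  · intro h r _
    exact dvd_trans (Nat.ordProj_dvd n r) h
  · intro h
    rw [← Nat.factorization_le_iff_dvd hn hM, Finsupp.le_def]
    intro l
    by_cases hl : l ∈ n.primeFactors
    · have hp : l.Prime := Nat.prime_of_mem_primeFactors hl
      exact (Nat.Prime.pow_dvd_iff_le_factorization hp hM).mp (h l hl)
    · rw [← Nat.support_factorization] at hl
      simp [Finsupp.notMem_support_iff.mp hl]

lemma helper_two_pow {n : ℕ} (hn : n ≠ 0) (h : ∀ r ∈ n.primeFactors, r = 2) :
    n = 2 ^ (n.factorization 2) := by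
  have h1 : ordCompl[2] n = 1 := by
    rw [Nat.eq_one_iff_not_exists_prime_dvd]
    intro q hq hdvd
    have hq2 : q ∣ n := hdvd.trans (Nat.ordCompl_dvd n 2)
    have := h q (Nat.mem_primeFactors.mpr ⟨hq, hq2, hn⟩)
    subst this
    exact Nat.not_dvd_ordCompl Nat.prime_two hn hdvd
  have h2 := Nat.ordProj_mul_ordCompl_eq_self n 2
  rw [h1, mul_one] at h2
  exact h2.symm

section Helpers

private lemma helper_ord_ne_zero {q p : ℕ} [NeZero q] (h : Nat.Coprime p q) :
    orderOf (p : ZMod q) ≠ 0 := by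
  have h1 : ((ZMod.unitOfCoprime p h : (ZMod q)ˣ) : ZMod q) = p := ZMod.coe_unitOfCoprime p h
  rw [← h1, orderOf_units]
  exact (orderOf_pos _).ne'

end Helpers

/-- Criterion for `p^i ≡ -1 (mod n)`.  Write `n = ∏ r^{e_r}` and for each odd prime
`r ∣ n` let `d_r` be the multiplicative order of `p` mod `r^{e_r}`.  Then `p^i ≡ -1
(mod n)` is solvable iff (i) the `d_r` are all even with the same 2-part `2^k ≥ 2`;
(ii) if `2 ∣ n` but `4 ∤ n` then `p ≡ -1 (mod 2)`; (iii) if `4 ∣ n` then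
`p ≡ -1 (mod 2^{e_2})` and `k = 1`.  Moreover, when a solution exists,
`i = lcm { d_r / 2 : r odd prime dividing n }` works if `n` has an odd prime divisor,
and `i = 1` works otherwise. -/
theorem stmt7 (n p : ℕ) (hn : 1 ≤ n) (hcop : Nat.Coprime p n) :
    ((∃ i : ℕ, (p : ZMod n) ^ i = -1) ↔
      ∃ k : ℕ, 1 ≤ k ∧
        (∀ r : ℕ, r.Prime → Odd r → r ∣ n →
          (orderOf (p : ZMod (r ^ (n.factorization r)))).factorization 2 = k) ∧
        (¬ (4 ∣ n) → 2 ∣ n → (p : ZMod 2) = -1) ∧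
        (4 ∣ n → (p : ZMod (2 ^ (n.factorization 2))) = -1 ∧ k = 1)) ∧
    ((∃ i : ℕ, (p : ZMod n) ^ i = -1) →
      (((n.primeFactors.filter (fun r => r ≠ 2)).Nonempty →
        (p : ZMod n) ^ ((n.primeFactors.filter (fun r => r ≠ 2)).lcm
          (fun r => orderOf (p : ZMod (r ^ (n.factorization r))) / 2)) = -1) ∧
      (¬ (n.primeFactors.filter (fun r => r ≠ 2)).Nonempty →
        (p : ZMod n) ^ 1 = -1))) := by
  have hn0 : n ≠ 0 := by omega
  set S := n.primeFactors.filter (fun r => r ≠ 2) with hSdef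
  set f : ℕ → ℕ := fun r => orderOf (p : ZMod (r ^ (n.factorization r))) with hfdef
  have hSmem : ∀ r, r ∈ S ↔ (r.Prime ∧ Odd r ∧ r ∣ n) := by
    intro r
    rw [hSdef, Finset.mem_filter, Nat.mem_primeFactors]
    constructor
    · rintro ⟨⟨h1, h2, _⟩, h3⟩
      exact ⟨h1, h1.odd_of_ne_two h3, h2⟩
    · rintro ⟨h1, h2, h3⟩
      refine ⟨⟨h1, h3, hn0⟩, ?_⟩
      rintro rfl
      exact (by decide : ¬ Odd 2) h2
  have hloc : ∀ i : ℕ, ((p : ZMod n) ^ i = -1 ↔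
      ∀ r ∈ n.primeFactors, r ^ (n.factorization r) ∣ p ^ i + 1) := by
    intro i
    rw [helper_cast, helper_split hn0 (by positivity)]
  -- order nonzero and divisibility facts for odd primes
  have hdfacts : ∀ r ∈ S, f r ≠ 0 ∧ Nat.Coprime p (r ^ (n.factorization r)) := by
    intro r hr
    obtain ⟨hp, hoddr, hdvd⟩ := (hSmem r).mp hr
    haveI : NeZero (r ^ (n.factorization r)) := ⟨pow_ne_zero _ hp.pos.ne'⟩
    have hc : Nat.Coprime p (r ^ (n.factorization r)) :=
      hcop.coprime_dvd_right (Nat.ordProj_dvd n r)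
    exact ⟨helper_ord_ne_zero hc, hc⟩
  -- KEY1 : forward direction
  have key1 : (∃ i : ℕ, (p : ZMod n) ^ i = -1) →
      ∃ k : ℕ, 1 ≤ k ∧
        (∀ r : ℕ, r.Prime → Odd r → r ∣ n → (f r).factorization 2 = k) ∧
        (¬ (4 ∣ n) → 2 ∣ n → (p : ZMod 2) = -1) ∧
        (4 ∣ n → (p : ZMod (2 ^ (n.factorization 2))) = -1 ∧ k = 1) := by
    rintro ⟨i, hi⟩
    rw [hloc i] at hi
    refine ⟨i.factorization 2 + 1, by omega, ?_, ?_, ?_⟩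
    · intro r hp hoddr hdvd
      have hrS : r ∈ S := (hSmem r).mpr ⟨hp, hoddr, hdvd⟩
      have he : 1 ≤ n.factorization r := hp.factorization_pos_of_dvd hn0 hdvd
      have hq := hi r (Nat.mem_primeFactors.mpr ⟨hp, hdvd, hn0⟩)
      rw [← helper_cast, helper_local_odd hp hoddr he,
        helper_dvd2 (hdfacts r hrS).1] at hq
      exact hq.2.2
    · intro _ h2dvd
      have hpodd : Odd p := Nat.coprime_two_right.mp (hcop.coprime_dvd_right h2dvd)
      have hcast : (p : ZMod 2) = ((p % 2 : ℕ) : ZMod 2) := (ZMod.natCast_mod p 2).symm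
      rw [hcast, Nat.odd_iff.mp hpodd]
      decide
    · intro h4
      have he2 : 2 ≤ n.factorization 2 := by
        have h4' : (2 : ℕ) ^ 2 ∣ n := by norm_num; exact h4
        exact (Nat.Prime.pow_dvd_iff_le_factorization Nat.prime_two hn0).mp h4'
      have h2n : (2 : ℕ) ∣ n := dvd_trans (by norm_num) h4
      have hq := hi 2 (Nat.mem_primeFactors.mpr ⟨Nat.prime_two, h2n, hn0⟩)
      rw [← helper_cast,
        helper_local_two he2 (hcop.coprime_dvd_right (Nat.ordProj_dvd n 2))] at hq
      refine ⟨hq.1, ?_⟩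
      have hnd : ¬ (2 : ℕ) ∣ i := by
        have := Nat.odd_iff.mp hq.2
        omega
      have : i.factorization 2 = 0 := Nat.factorization_eq_zero_of_not_dvd hnd
      omega
  -- KEY2 : construction when S nonempty
  have key2 : (∃ k : ℕ, 1 ≤ k ∧
        (∀ r : ℕ, r.Prime → Odd r → r ∣ n → (f r).factorization 2 = k) ∧
        (¬ (4 ∣ n) → 2 ∣ n → (p : ZMod 2) = -1) ∧
        (4 ∣ n → (p : ZMod (2 ^ (n.factorization 2))) = -1 ∧ k = 1)) →
      S.Nonempty → (p : ZMod n) ^ (S.lcm (fun r => f r / 2)) = -1 := by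
    rintro ⟨k, hk1, hall, h2, h4⟩ hSne
    set i := S.lcm (fun r => f r / 2) with hidef
    -- facts about each d = f r for r in S
    have hdS : ∀ r ∈ S, 2 ∣ f r ∧ (f r).factorization 2 = k ∧ f r / 2 ≠ 0 ∧
        (f r / 2).factorization 2 = k - 1 := by
      intro r hr
      obtain ⟨hp, hoddr, hdvd⟩ := (hSmem r).mp hr
      have hd0 : f r ≠ 0 := (hdfacts r hr).1
      have hvk : (f r).factorization 2 = k := hall r hp hoddr hdvd
      have h2d : (2 : ℕ) ∣ f r := by
        have : (2 : ℕ) ^ 1 ∣ f r :=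
          (Nat.Prime.pow_dvd_iff_le_factorization Nat.prime_two hd0).mpr (by omega)
        simpa using this
      have hhalf0 : f r / 2 ≠ 0 := by
        have := Nat.div_mul_cancel h2d
        intro h0
        rw [h0, zero_mul] at this
        exact hd0 this.symm
      refine ⟨h2d, hvk, hhalf0, ?_⟩
      rw [Nat.factorization_div h2d]
      simp [Nat.Prime.factorization Nat.prime_two, hvk]
    have hlcm := helper_lcm_fact (k - 1) S (fun r => f r / 2)
      (fun r hr => (hdS r hr).2.2.1) (fun r hr => (hdS r hr).2.2.2)
    rw [← hidef] at hlcm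
    have hi0 : i ≠ 0 := hlcm.1
    have hvi : i.factorization 2 = k - 1 := hlcm.2 hSne
    rw [hloc i]
    intro r hrP
    have hrp : r.Prime := Nat.prime_of_mem_primeFactors hrP
    have hrdvd : r ∣ n := Nat.dvd_of_mem_primeFactors hrP
    by_cases hr2 : r = 2
    · subst hr2
      have he1 : 1 ≤ n.factorization 2 := hrp.factorization_pos_of_dvd hn0 hrdvd
      rcases Nat.lt_or_ge (n.factorization 2) 2 with hlt | hge
      · -- exponent is 1 : just need 2 ∣ p^i + 1
        have he : n.factorization 2 = 1 := by omega
        rw [he, pow_one]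
        have hpodd : Odd p := Nat.coprime_two_right.mp (hcop.coprime_dvd_right hrdvd)
        obtain ⟨j, hj⟩ := hpodd.pow (n := i)
        omega
      · -- exponent ≥ 2
        have h4n : (4 : ℕ) ∣ n := by
          have : (2 : ℕ) ^ 2 ∣ n :=
            (Nat.Prime.pow_dvd_iff_le_factorization Nat.prime_two hn0).mpr hge
          norm_num at this
          exact this
        obtain ⟨hpneg, hk⟩ := h4 h4n
        have hiodd : Odd i := by
          rw [Nat.odd_iff]
          have : ¬ (2 : ℕ) ∣ i := by
            intro hdd
            have := (Nat.Prime.factorization_pos_of_dvd Nat.prime_two hi0 hdd)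
            omega
          omega
        rw [← helper_cast]
        exact (helper_local_two hge (hcop.coprime_dvd_right (Nat.ordProj_dvd n 2)) i).mpr
          ⟨hpneg, hiodd⟩
    · have hrS : r ∈ S := by
        rw [hSdef, Finset.mem_filter]
        exact ⟨hrP, hr2⟩
      obtain ⟨hp, hoddr, hdvd⟩ := (hSmem r).mp hrS
      have he : 1 ≤ n.factorization r := hp.factorization_pos_of_dvd hn0 hdvd
      obtain ⟨h2d, hvk, hh0, hvh⟩ := hdS r hrS
      rw [← helper_cast, helper_local_odd hp hoddr he, helper_dvd2 (hdfacts r hrS).1]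
      have hdvd2i : f r ∣ 2 * i := by
        have h1 : f r / 2 ∣ i := Finset.dvd_lcm hrS
        have h2 : 2 * (f r / 2) = f r := Nat.mul_div_cancel' h2d
        calc f r = 2 * (f r / 2) := h2.symm
        _ ∣ 2 * i := mul_dvd_mul_left 2 h1
      exact ⟨hdvd2i, hi0, by omega⟩
  -- KEY3 : when S is empty
  have key3 : (∃ k : ℕ, 1 ≤ k ∧
        (∀ r : ℕ, r.Prime → Odd r → r ∣ n → (f r).factorization 2 = k) ∧
        (¬ (4 ∣ n) → 2 ∣ n → (p : ZMod 2) = -1) ∧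
        (4 ∣ n → (p : ZMod (2 ^ (n.factorization 2))) = -1 ∧ k = 1)) →
      ¬ S.Nonempty → (p : ZMod n) ^ 1 = -1 := by
    rintro ⟨k, hk1, hall, h2, h4⟩ hSe
    rw [pow_one]
    have hall2 : ∀ r ∈ n.primeFactors, r = 2 := by
      intro r hr
      by_contra hr2
      exact hSe ⟨r, by rw [hSdef, Finset.mem_filter]; exact ⟨hr, hr2⟩⟩
    obtain ⟨e2, he2⟩ : ∃ e2, n.factorization 2 = e2 := ⟨_, rfl⟩
    have hn2 : n = 2 ^ e2 := by rw [← he2]; exact helper_two_pow hn0 hall2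
    rw [he2] at h4
    rcases Nat.lt_or_ge e2 2 with hlt | hge
    · interval_cases e2
      · have hn1 : n = 1 := by simpa using hn2
        subst hn1
        exact Subsingleton.elim _ _
      · have hn1 : n = 2 := by simpa using hn2
        subst hn1
        have hpodd : Odd p := Nat.coprime_two_right.mp hcop
        have hcast : (p : ZMod 2) = ((p % 2 : ℕ) : ZMod 2) := (ZMod.natCast_mod p 2).symm
        rw [hcast, Nat.odd_iff.mp hpodd]
        decide
    · have h4n : (4 : ℕ) ∣ n := by
        rw [hn2]
        have : (2 : ℕ) ^ 2 ∣ 2 ^ e2 := pow_dvd_pow 2 hge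
        norm_num at this ⊢
        exact this
      have := (h4 h4n).1
      rw [hn2]
      exact this
  refine ⟨⟨key1, ?_⟩, fun hex => ⟨key2 (key1 hex), key3 (key1 hex)⟩⟩
  intro hc
  by_cases hSne : S.Nonempty
  · exact ⟨_, key2 hc hSne⟩
  · exact ⟨1, key3 hc hSne⟩
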